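/- For all real numbers b₁, b₂ and every real exponent γ with 2 < γ ≤ 3, there exists a constant c > 0 (depending only on γ) such that ||b₁ + b₂|^γ − |b₁|^γ − γ|b₁|^{γ−2} b₁ b₂ − (1/2)γ(γ−1)|b₁|^{γ−2} b₂²| ≤ c|b₂|^γ. -/

import Mathlib

open Set Filter Asymptotics Topology

/-- Subadditivity of `rpow` for exponent in `[0,1]`. -/
lemma my_rpow_subadd {p : ℝ} (hp0 : 0 ≤ p) (hp1 : p ≤ 1) {x y : ℝ} (hx : 0 ≤ x) (hy : 0 ≤ y) :
    (x + y) ^ p ≤ x ^ p + y ^ p := by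
  have h := NNReal.rpow_add_le_add_rpow x.toNNReal y.toNNReal hp0 hp1
  rw [← Real.toNNReal_add hx hy] at h
  have h2 := NNReal.coe_le_coe.2 h
  simpa [NNReal.coe_rpow, Real.coe_toNNReal _ (by positivity : (0:ℝ) ≤ x + y),
    Real.coe_toNNReal _ hx, Real.coe_toNNReal _ hy] using h2

lemma my_rpow_sub_le {p : ℝ} (hp0 : 0 ≤ p) (hp1 : p ≤ 1) {x y : ℝ} (hy : 0 ≤ y) (hxy : y ≤ x) :
    x ^ p - y ^ p ≤ (x - y) ^ p := by
  have h : x ^ p ≤ (x - y) ^ p + y ^ p := by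
    have := my_rpow_subadd hp0 hp1 (x := x - y) (y := y) (by linarith) hy
    simpa using this
  linarith

/-- Hölder estimate `||x|^p - |y|^p| ≤ |x - y|^p` for `p ∈ (0,1]`. -/
lemma my_abs_rpow_holder {p : ℝ} (hp0 : 0 < p) (hp1 : p ≤ 1) (x y : ℝ) :
    abs (|x| ^ p - |y| ^ p) ≤ |x - y| ^ p := by
  have key : ∀ a b : ℝ, |b| ≤ |a| → |a| ^ p - |b| ^ p ≤ |a - b| ^ p := by
    intro a b hab
    calc |a| ^ p - |b| ^ p ≤ (|a| - |b|) ^ p :=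
          my_rpow_sub_le hp0.le hp1 (abs_nonneg b) hab
      _ ≤ |a - b| ^ p :=
          Real.rpow_le_rpow (by linarith) (abs_sub_abs_le_abs_sub a b) hp0.le
  rcases le_total |y| |x| with h | h
  · rw [abs_sub_le_iff]
    refine ⟨key x y h, ?_⟩
    have : |y| ^ p - |x| ^ p ≤ 0 := by
      have := Real.rpow_le_rpow (abs_nonneg y) h hp0.le
      linarith
    exact this.trans (Real.rpow_nonneg (abs_nonneg _) _)
  · rw [abs_sub_le_iff]
    refine ⟨?_, by simpa [abs_sub_comm x y] using key y x h⟩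
    have : |x| ^ p - |y| ^ p ≤ 0 := by
      have := Real.rpow_le_rpow (abs_nonneg x) h hp0.le
      linarith
    exact this.trans (Real.rpow_nonneg (abs_nonneg _) _)

/-- Derivative of the signed power `x ↦ |x|^r * x`. -/
lemma my_hasDerivAt_signed {r : ℝ} (hr : 0 < r) (x : ℝ) :
    HasDerivAt (fun y : ℝ => |y| ^ r * y) ((r + 1) * |x| ^ r) x := by
  rcases lt_trichotomy x 0 with hx | rfl | hx
  · have hne : -x ≠ 0 := neg_ne_zero.2 hx.ne
    have h1 : HasDerivAt (fun y : ℝ => (-y) ^ (r + 1)) ((r + 1) * (-x) ^ r * (-1)) x := by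
      have := (Real.hasDerivAt_rpow_const (p := r + 1) (Or.inl hne)).comp x (hasDerivAt_neg x)
      simpa [Function.comp_def] using this
    have h2 : HasDerivAt (fun y : ℝ => -((-y) ^ (r + 1))) ((r + 1) * (-x) ^ r) x := by
      have := h1.neg
      exact this.congr_deriv (by ring)
    have hev : (fun y : ℝ => -((-y) ^ (r + 1))) =ᶠ[𝓝 x] fun y => |y| ^ r * y := by
      filter_upwards [eventually_lt_nhds hx] with y hy
      have hny : -y ≠ 0 := neg_ne_zero.2 hy.ne
      rw [abs_of_neg hy, Real.rpow_add_one hny r]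
      ring
    have := h2.congr_of_eventuallyEq hev.symm
    rwa [abs_of_neg hx]
  · have h0 : (fun h : ℝ => |h| ^ r * h - |(0:ℝ)| ^ r * 0 - (h - 0) * ((r + 1) * |(0:ℝ)| ^ r))
        =ᶠ[𝓝 0] fun h => |h| ^ r * h := by
      filter_upwards with h
      simp [Real.zero_rpow hr.ne']
    rw [hasDerivAt_iff_isLittleO]
    refine (isLittleO_iff.2 fun c hc => ?_).congr' h0.symm (by rfl)
    have hcont : ContinuousAt (fun h : ℝ => |h| ^ r) 0 := by
      exact (Real.continuousAt_rpow_const _ _ (Or.inr hr.le)).comp continuous_abs.continuousAt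
    have ht : Tendsto (fun h : ℝ => |h| ^ r) (𝓝 0) (𝓝 0) := by
      have := hcont.tendsto
      simpa [Real.zero_rpow hr.ne'] using this
    filter_upwards [ht.eventually (eventually_lt_nhds hc)] with h hh
    have h1 : ‖|h| ^ r * h‖ = |h| ^ r * |h| := by
      rw [norm_mul, Real.norm_eq_abs, Real.norm_eq_abs,
        abs_of_nonneg (Real.rpow_nonneg (abs_nonneg h) r)]
    rw [h1, Real.norm_eq_abs, sub_zero]
    exact mul_le_mul_of_nonneg_right hh.le (abs_nonneg h)
  · have h1 : HasDerivAt (fun y : ℝ => y ^ (r + 1)) ((r + 1) * x ^ r) x := by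
      have := Real.hasDerivAt_rpow_const (p := r + 1) (Or.inl hx.ne')
      simpa using this
    have hev : (fun y : ℝ => y ^ (r + 1)) =ᶠ[𝓝 x] fun y => |y| ^ r * y := by
      filter_upwards [eventually_gt_nhds hx] with y hy
      rw [abs_of_pos hy, ← Real.rpow_add_one hy.ne' r]
    have := h1.congr_of_eventuallyEq hev.symm
    rwa [abs_of_pos hx]

/-- Derivative of `x ↦ |x|^q` for `q > 2`. -/
lemma my_hasDerivAt_abs_rpow {q : ℝ} (hq : 2 < q) (x : ℝ) :
    HasDerivAt (fun y : ℝ => |y| ^ q) (q * (|x| ^ (q - 2) * x)) x := by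
  have hq2 : q - 2 ≠ 0 := by linarith
  rcases lt_trichotomy x 0 with hx | rfl | hx
  · have hne : -x ≠ 0 := neg_ne_zero.2 hx.ne
    have h1 : HasDerivAt (fun y : ℝ => (-y) ^ q) (q * (-x) ^ (q - 1) * (-1)) x := by
      have := (Real.hasDerivAt_rpow_const (p := q) (Or.inl hne)).comp x (hasDerivAt_neg x)
      simpa [Function.comp_def] using this
    have hev : (fun y : ℝ => (-y) ^ q) =ᶠ[𝓝 x] fun y => |y| ^ q := by
      filter_upwards [eventually_lt_nhds hx] with y hy
      rw [abs_of_neg hy]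
    have h2 := h1.congr_of_eventuallyEq hev.symm
    have heq : q * (-x) ^ (q - 1) * (-1) = q * (|x| ^ (q - 2) * x) := by
      rw [abs_of_neg hx]
      have : (-x) ^ (q - 1) = (-x) ^ (q - 2) * (-x) := by
        rw [← Real.rpow_add_one hne]; ring_nf
      rw [this]; ring
    rwa [heq] at h2
  · have h0 : (fun h : ℝ => |h| ^ q - |(0:ℝ)| ^ q - (h - 0) * (q * (|(0:ℝ)| ^ (q - 2) * 0)))
        =ᶠ[𝓝 0] fun h => |h| ^ q := by
      filter_upwards with h
      simp [Real.zero_rpow (by positivity : q ≠ 0)]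
    rw [hasDerivAt_iff_isLittleO]
    refine (isLittleO_iff.2 fun c hc => ?_).congr' h0.symm (by rfl)
    have hq1 : (0:ℝ) < q - 1 := by linarith
    have hcont : ContinuousAt (fun h : ℝ => |h| ^ (q - 1)) 0 :=
      (Real.continuousAt_rpow_const _ _ (Or.inr hq1.le)).comp continuous_abs.continuousAt
    have ht : Tendsto (fun h : ℝ => |h| ^ (q - 1)) (𝓝 0) (𝓝 0) := by
      have := hcont.tendsto
      simpa [Real.zero_rpow hq1.ne'] using this
    filter_upwards [ht.eventually (eventually_lt_nhds hc)] with h hh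
    rcases eq_or_ne h 0 with rfl | hne
    · simp [Real.zero_rpow (by positivity : q ≠ 0)]
    · have h1 : ‖|h| ^ q‖ = |h| ^ (q - 1) * |h| := by
        rw [Real.norm_eq_abs, abs_of_nonneg (Real.rpow_nonneg (abs_nonneg h) q),
          ← Real.rpow_add_one (abs_ne_zero.2 hne)]
        ring_nf
      rw [h1, Real.norm_eq_abs, sub_zero]
      exact mul_le_mul_of_nonneg_right hh.le (abs_nonneg h)
  · have h1 : HasDerivAt (fun y : ℝ => y ^ q) (q * x ^ (q - 1)) x := by
      have := Real.hasDerivAt_rpow_const (p := q) (Or.inl hx.ne')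
      simpa using this
    have hev : (fun y : ℝ => y ^ q) =ᶠ[𝓝 x] fun y => |y| ^ q := by
      filter_upwards [eventually_gt_nhds hx] with y hy
      rw [abs_of_pos hy]
    have h2 := h1.congr_of_eventuallyEq hev.symm
    have heq : q * x ^ (q - 1) = q * (|x| ^ (q - 2) * x) := by
      rw [abs_of_pos hx]
      have : x ^ (q - 1) = x ^ (q - 2) * x := by
        rw [← Real.rpow_add_one hx.ne']; ring_nf
      rw [this]
    rwa [heq] at h2

theorem stmt_0 (γ : ℝ) (hγ2 : 2 < γ) (hγ3 : γ ≤ 3) :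
    ∃ c : ℝ, 0 < c ∧ ∀ b₁ b₂ : ℝ,
      abs (|b₁ + b₂| ^ γ - |b₁| ^ γ - γ * |b₁| ^ (γ - 2) * b₁ * b₂
        - (1 / 2) * γ * (γ - 1) * |b₁| ^ (γ - 2) * b₂ ^ 2)
        ≤ c * |b₂| ^ γ := by
  have hp0 : (0:ℝ) < γ - 2 := by linarith
  have hp1 : γ - 2 ≤ 1 := by linarith
  have hK : (0:ℝ) < γ * (γ - 1) := by nlinarith
  refine ⟨γ * (γ - 1), hK, fun b₁ b₂ => ?_⟩
  rcases eq_or_ne b₂ 0 with rfl | hb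
  · simp [Real.zero_rpow (by positivity : γ ≠ 0), Real.rpow_nonneg, abs_nonneg]
  have hb' : (0:ℝ) < |b₂| := abs_pos.2 hb
  set p : ℝ := γ - 2 with hp
  -- Step A : second order difference of the first derivative
  have stepA : ∀ u : ℝ, |u| ≤ |b₂| →
      |γ * (|b₁ + u| ^ p * (b₁ + u)) - γ * (|b₁| ^ p * b₁) - γ * (γ - 1) * |b₁| ^ p * u|
        ≤ γ * (γ - 1) * |b₂| ^ p * |b₂| := by
    intro u hu
    set h : ℝ → ℝ := fun s => γ * (|b₁ + s * u| ^ p * (b₁ + s * u)) - γ * (γ - 1) * |b₁| ^ p * (s * u)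
      with hh
    have hder : ∀ s : ℝ, HasDerivAt h (γ * (γ - 1) * ((|b₁ + s * u| ^ p - |b₁| ^ p) * u)) s := by
      intro s
      have hlin : HasDerivAt (fun s : ℝ => b₁ + s * u) u s := by
        simpa using ((hasDerivAt_id s).mul_const u).const_add b₁
      have h2 := (my_hasDerivAt_signed hp0 (b₁ + s * u)).comp s hlin
      have h3 : HasDerivAt (fun s : ℝ => γ * (γ - 1) * |b₁| ^ p * (s * u))
          (γ * (γ - 1) * |b₁| ^ p * u) s := by
        simpa using ((hasDerivAt_id s).mul_const u).const_mul (γ * (γ - 1) * |b₁| ^ p)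
      have h4 := (h2.const_mul γ).sub h3
      exact h4.congr_deriv (by simp only [hp]; ring)
    have bound : ∀ s ∈ Ico (0:ℝ) 1,
        ‖γ * (γ - 1) * ((|b₁ + s * u| ^ p - |b₁| ^ p) * u)‖ ≤ γ * (γ - 1) * |b₂| ^ p * |b₂| := by
      intro s hs
      have hsu : |s * u| ≤ |b₂| := by
        rw [abs_mul]
        calc |s| * |u| ≤ 1 * |b₂| := by
              apply mul_le_mul _ hu (abs_nonneg u) zero_le_one
              rw [abs_of_nonneg hs.1]; exact hs.2.le
          _ = |b₂| := one_mul _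
      have hh1 : abs (|b₁ + s * u| ^ p - |b₁| ^ p) ≤ |b₂| ^ p := by
        have := my_abs_rpow_holder hp0 hp1 (b₁ + s * u) b₁
        simp only [add_sub_cancel_left] at this
        exact this.trans (Real.rpow_le_rpow (abs_nonneg _) hsu hp0.le)
      rw [Real.norm_eq_abs, abs_mul, abs_of_pos hK, abs_mul]
      have h5 : abs (|b₁ + s * u| ^ p - |b₁| ^ p) * |u| ≤ |b₂| ^ p * |b₂| :=
        mul_le_mul hh1 hu (abs_nonneg u) (Real.rpow_nonneg (abs_nonneg _) _)
      calc γ * (γ - 1) * (abs (|b₁ + s * u| ^ p - |b₁| ^ p) * |u|)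
          ≤ γ * (γ - 1) * (|b₂| ^ p * |b₂|) := by
            exact mul_le_mul_of_nonneg_left h5 hK.le
        _ = γ * (γ - 1) * |b₂| ^ p * |b₂| := by ring
    have := norm_image_sub_le_of_norm_deriv_le_segment_01'
      (f' := fun s => γ * (γ - 1) * ((|b₁ + s * u| ^ p - |b₁| ^ p) * u))
      (fun s _ => (hder s).hasDerivWithinAt) bound
    have heq : h 1 - h 0 =
        γ * (|b₁ + u| ^ p * (b₁ + u)) - γ * (|b₁| ^ p * b₁) - γ * (γ - 1) * |b₁| ^ p * u := by
      simp only [hh]; ring_nf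
    rw [Real.norm_eq_abs, heq] at this
    exact this
  -- Step B : Taylor expansion of |·|^γ
  set g : ℝ → ℝ := fun t => |b₁ + t * b₂| ^ γ - γ * (|b₁| ^ p * b₁) * (t * b₂)
    - (1 / 2) * (γ * (γ - 1) * |b₁| ^ p) * (t * b₂) ^ 2 with hg
  have gder : ∀ t : ℝ, HasDerivAt g
      ((γ * (|b₁ + t * b₂| ^ p * (b₁ + t * b₂)) - γ * (|b₁| ^ p * b₁)
        - γ * (γ - 1) * |b₁| ^ p * (t * b₂)) * b₂) t := by
    intro t
    have hlin : HasDerivAt (fun t : ℝ => b₁ + t * b₂) b₂ t := by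
      simpa using ((hasDerivAt_id t).mul_const b₂).const_add b₁
    have h1 := (my_hasDerivAt_abs_rpow hγ2 (b₁ + t * b₂)).comp t hlin
    have h2 : HasDerivAt (fun t : ℝ => γ * (|b₁| ^ p * b₁) * (t * b₂))
        (γ * (|b₁| ^ p * b₁) * b₂) t := by
      simpa using ((hasDerivAt_id t).mul_const b₂).const_mul (γ * (|b₁| ^ p * b₁))
    have h3 : HasDerivAt (fun t : ℝ => (1 / 2) * (γ * (γ - 1) * |b₁| ^ p) * (t * b₂) ^ 2)
        ((1 / 2) * (γ * (γ - 1) * |b₁| ^ p) * (2 * (t * b₂) * b₂)) t := by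
      have := (((hasDerivAt_id t).mul_const b₂).pow 2).const_mul ((1:ℝ) / 2 * (γ * (γ - 1) * |b₁| ^ p))
      exact this.congr_deriv (by simp)
    have h4 := (h1.sub h2).sub h3
    exact h4.congr_deriv (by simp only [hp]; ring)
  have gbound : ∀ t ∈ Ico (0:ℝ) 1,
      ‖(γ * (|b₁ + t * b₂| ^ p * (b₁ + t * b₂)) - γ * (|b₁| ^ p * b₁)
        - γ * (γ - 1) * |b₁| ^ p * (t * b₂)) * b₂‖ ≤ γ * (γ - 1) * |b₂| ^ p * |b₂| * |b₂| := by
    intro t ht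
    have htb : |t * b₂| ≤ |b₂| := by
      rw [abs_mul]
      calc |t| * |b₂| ≤ 1 * |b₂| := by
            apply mul_le_mul_of_nonneg_right _ (abs_nonneg b₂)
            rw [abs_of_nonneg ht.1]; exact ht.2.le
        _ = |b₂| := one_mul _
    have hA := stepA (t * b₂) htb
    rw [Real.norm_eq_abs, abs_mul]
    exact mul_le_mul hA le_rfl (abs_nonneg b₂)
      (by positivity)
  have key := norm_image_sub_le_of_norm_deriv_le_segment_01'
    (f' := fun t => (γ * (|b₁ + t * b₂| ^ p * (b₁ + t * b₂)) - γ * (|b₁| ^ p * b₁)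
      - γ * (γ - 1) * |b₁| ^ p * (t * b₂)) * b₂)
    (fun t _ => (gder t).hasDerivWithinAt) gbound
  have hgeq : g 1 - g 0 = |b₁ + b₂| ^ γ - |b₁| ^ γ - γ * |b₁| ^ (γ - 2) * b₁ * b₂
      - (1 / 2) * γ * (γ - 1) * |b₁| ^ (γ - 2) * b₂ ^ 2 := by
    simp only [hg, hp]; ring_nf
  rw [Real.norm_eq_abs, hgeq] at key
  refine key.trans (le_of_eq ?_)
  have hrw : |b₂| ^ p * |b₂| * |b₂| = |b₂| ^ γ := by
    rw [← Real.rpow_add_one hb'.ne', ← Real.rpow_add_one hb'.ne']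
    congr 1
    simp only [hp]; ring
  rw [← hrw]; ring
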